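/- There are exactly (n−1)!/2 distinct deformed realizations: for n ≥ 4, the number of distinct families F(σ) = { σ(I) : I a cyclic interval of ZMod n with 2 ≤ |I| ≤ n−2 }, as σ ranges over all permutations of ZMod n, equals (n−1)!/2. Equivalently, F(σ₁) = F(σ₂) if and only if σ₂⁻¹σ₁ lies in the dihedral subgroup D, and the number of cosets of D in Perm(ZMod n) is (n−1)!/2. -/

import Mathlib

/-- A cyclic interval of `ZMod n`: a set of the form `{a, a+1, …, a+k-1}` with `1 ≤ k ≤ n`. -/
def IsCyclicInterval {n : ℕ} (I : Finset (ZMod n)) : Prop :=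
  ∃ a : ZMod n, ∃ k : ℕ, 1 ≤ k ∧ k ≤ n ∧
    I = (Finset.range k).image (fun m : ℕ => a + (m : ZMod n))

/-- The family of σ-planar pole index sets:
`F(σ) = { σ(I) : I a cyclic interval with 2 ≤ |I| ≤ n - 2 }`. -/
def poleFamily {n : ℕ} (σ : Equiv.Perm (ZMod n)) : Set (Finset (ZMod n)) :=
  { S | ∃ I : Finset (ZMod n),
      IsCyclicInterval I ∧ 2 ≤ I.card ∧ I.card ≤ n - 2 ∧ S = I.image σ }

/-- The dihedral subgroup of `Perm (ZMod n)`, generated by the rotation `x ↦ x + 1`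
and the reflection `x ↦ -x`. -/
def dihedralZ (n : ℕ) : Subgroup (Equiv.Perm (ZMod n)) :=
  Subgroup.closure {Equiv.addRight (1 : ZMod n), Equiv.neg (ZMod n)}

section Aux

open Equiv Finset

variable {n : ℕ}

/-- The subgroup of affine permutations `x ↦ ±x + a`. -/
def affA (n : ℕ) : Subgroup (Equiv.Perm (ZMod n)) where
  carrier := {σ | ∃ a : ZMod n, (∀ x, σ x = x + a) ∨ (∀ x, σ x = -x + a)}
  one_mem' := ⟨0, Or.inl fun x => (add_zero x).symm⟩
  mul_mem' := by
    rintro σ τ ⟨a, ha⟩ ⟨b, hb⟩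
    rcases ha with ha | ha <;> rcases hb with hb | hb
    · exact ⟨b + a, Or.inl fun x => by simp [Equiv.Perm.mul_apply, ha, hb, add_assoc]⟩
    · exact ⟨b + a, Or.inr fun x => by simp [Equiv.Perm.mul_apply, ha, hb, add_assoc]⟩
    · exact ⟨a - b, Or.inr fun x => by simp [Equiv.Perm.mul_apply, ha, hb]; ring⟩
    · exact ⟨a - b, Or.inl fun x => by simp [Equiv.Perm.mul_apply, ha, hb]; ring⟩
  inv_mem' := by
    rintro σ ⟨a, ha | ha⟩
    · refine ⟨-a, Or.inl fun x => σ.injective ?_⟩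
      rw [← Equiv.Perm.mul_apply, mul_inv_cancel, Equiv.Perm.one_apply, ha]; ring
    · refine ⟨a, Or.inr fun x => σ.injective ?_⟩
      rw [← Equiv.Perm.mul_apply, mul_inv_cancel, Equiv.Perm.one_apply, ha]; ring

lemma addRight_mem_dihedralZ [NeZero n] (a : ZMod n) :
    Equiv.addRight a ∈ dihedralZ n := by
  have key : ∀ m : ℕ, Equiv.addRight ((m : ZMod n)) ∈ dihedralZ n := by
    intro m
    induction m with
    | zero =>
      have : Equiv.addRight ((0 : ℕ) : ZMod n) = 1 := by
        ext x; simp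
      rw [this]; exact one_mem _
    | succ m ih =>
      have : Equiv.addRight (((m + 1 : ℕ) : ZMod n)) =
          Equiv.addRight (1 : ZMod n) * Equiv.addRight ((m : ZMod n)) := by
        ext x
        simp only [Equiv.coe_addRight, Equiv.Perm.mul_apply]
        push_cast
        ring
      rw [this]
      exact mul_mem (Subgroup.subset_closure (by simp)) ih
  have := key a.val
  rwa [ZMod.natCast_zmod_val] at this

lemma dihedralZ_eq_affA [NeZero n] : dihedralZ n = affA n := by
  apply le_antisymm
  · apply Subgroup.closure_le (affA n) |>.mpr
    rintro σ (rfl | rfl)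
    · exact ⟨1, Or.inl fun x => rfl⟩
    · exact ⟨0, Or.inr fun x => by simp⟩
  · rintro σ ⟨a, ha | ha⟩
    · have : σ = Equiv.addRight a := by ext x; simpa using ha x
      rw [this]; exact addRight_mem_dihedralZ a
    · have : σ = Equiv.addRight a * Equiv.neg (ZMod n) := by
        ext x; simp [Equiv.Perm.mul_apply, ha]
      rw [this]
      exact mul_mem (addRight_mem_dihedralZ a)
        (Subgroup.subset_closure (by simp))

lemma two_ne_zero_zmod (hn : 3 ≤ n) : (2 : ZMod n) ≠ 0 := by
  intro h
  have : ((2 : ℕ) : ZMod n) = 0 := by push_cast; exact h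
  rw [ZMod.natCast_eq_zero_iff] at this
  have := Nat.le_of_dvd (by norm_num) this
  omega

lemma one_ne_zero_zmod (hn : 2 ≤ n) : (1 : ZMod n) ≠ 0 := by
  intro h
  have : ((1 : ℕ) : ZMod n) = 0 := by push_cast; exact h
  rw [ZMod.natCast_eq_zero_iff] at this
  have := Nat.le_of_dvd (by norm_num) this
  omega

lemma card_affA (hn : 3 ≤ n) : Nat.card (affA n) = 2 * n := by
  haveI : NeZero n := ⟨by omega⟩
  classical
  set f : Bool × ZMod n → affA n := fun p =>
    ⟨if p.1 then Equiv.addRight p.2 else Equiv.addRight p.2 * Equiv.neg (ZMod n),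
      by
        rcases p with ⟨ε, a⟩
        cases ε
        · exact ⟨a, Or.inr fun x => by simp [Equiv.Perm.mul_apply]⟩
        · exact ⟨a, Or.inl fun x => by simp⟩⟩ with hf
    -- bijective
  have happT : ∀ a x : ZMod n, ((f (true, a) : Equiv.Perm (ZMod n)) x) = x + a := by
    intro a x; simp [hf]
  have happF : ∀ a x : ZMod n, ((f (false, a) : Equiv.Perm (ZMod n)) x) = -x + a := by
    intro a x; simp [hf, Equiv.Perm.mul_apply]
  have hbij : Function.Bijective f := by
    constructor
    · rintro ⟨ε, a⟩ ⟨ε', a'⟩ h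
      have hfun : ∀ x, ((f (ε, a) : Equiv.Perm (ZMod n)) x)
          = ((f (ε', a') : Equiv.Perm (ZMod n)) x) := by
        intro x; rw [h]
      have h0 := hfun 0
      have h1 := hfun 1
      cases ε <;> cases ε'
      · rw [happF, happF] at h0
        have : a = a' := by linear_combination h0
        rw [this]
      · rw [happF, happT] at h0 h1
        have h0' : a = a' := by linear_combination h0
        exact absurd (by linear_combination h0' - h1 : (2 : ZMod n) = 0)
          (two_ne_zero_zmod hn)
      · rw [happT, happF] at h0 h1
        have h0' : a = a' := by linear_combination h0
        exact absurd (by linear_combination h1 - h0' : (2 : ZMod n) = 0)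
          (two_ne_zero_zmod hn)
      · rw [happT, happT] at h0
        have : a = a' := by linear_combination h0
        rw [this]
    · rintro ⟨σ, a, ha | ha⟩
      · exact ⟨(true, a), Subtype.ext (Equiv.ext fun x => by rw [happT]; exact (ha x).symm)⟩
      · exact ⟨(false, a), Subtype.ext (Equiv.ext fun x => by rw [happF]; exact (ha x).symm)⟩
  rw [← Nat.card_eq_of_bijective f hbij]
  simp [Nat.card_eq_fintype_card, ZMod.card]

lemma index_dihedralZ (hn : 4 ≤ n) :
    (dihedralZ n).index = Nat.factorial (n - 1) / 2 := by
  haveI : NeZero n := ⟨by omega⟩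
  have hcard : Nat.card (dihedralZ n) = 2 * n := by
    rw [dihedralZ_eq_affA]; exact card_affA (by omega)
  have hG : Nat.card (Equiv.Perm (ZMod n)) = Nat.factorial n := by
    rw [Nat.card_eq_fintype_card, Fintype.card_perm, ZMod.card]
  have hmul := Subgroup.card_mul_index (dihedralZ n)
  rw [hcard, hG] at hmul
  have hdvd : 2 ∣ Nat.factorial (n - 1) :=
    Nat.dvd_factorial (by norm_num) (by omega)
  have key : 2 * n * (Nat.factorial (n - 1) / 2) = Nat.factorial n := by
    rw [mul_comm 2 n, mul_assoc, Nat.mul_div_cancel' hdvd,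
      Nat.mul_factorial_pred (by omega)]
  have := hmul.trans key.symm
  exact Nat.eq_of_mul_eq_mul_left (by positivity) this

/-! ### Intervals -/

lemma interval_card (hn : 0 < n) (a : ZMod n) {k : ℕ} (hk : k ≤ n) :
    ((Finset.range k).image (fun m : ℕ => a + (m : ZMod n))).card = k := by
  rw [Finset.card_image_of_injOn, Finset.card_range]
  intro m₁ h₁ m₂ h₂ h
  simp only [Finset.coe_range, Set.mem_Iio] at h₁ h₂
  have : (m₁ : ZMod n) = (m₂ : ZMod n) := by
    have := h; exact add_left_cancel this
  have v := congrArg ZMod.val this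
  rwa [ZMod.val_cast_of_lt (by omega), ZMod.val_cast_of_lt (by omega)] at v

lemma pair_eq_interval (a : ZMod n) :
    ({a, a + 1} : Finset (ZMod n)) =
      (Finset.range 2).image (fun m : ℕ => a + (m : ZMod n)) := by
  have : Finset.range 2 = {0, 1} := by decide
  rw [this]
  simp [Finset.image_insert]

lemma pair_isCyclicInterval (hn : 2 ≤ n) (a : ZMod n) :
    IsCyclicInterval ({a, a + 1} : Finset (ZMod n)) :=
  ⟨a, 2, by norm_num, by omega, pair_eq_interval a⟩

lemma pair_card (hn : 2 ≤ n) (a : ZMod n) :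
    ({a, a + 1} : Finset (ZMod n)).card = 2 := by
  rw [pair_eq_interval]
  exact interval_card (by omega) a (by omega)

lemma reverse_interval (b : ZMod n) (k : ℕ) :
    (Finset.range k).image (fun m : ℕ => b - (m : ZMod n)) =
      (Finset.range k).image (fun m : ℕ => (b - ((k - 1 : ℕ) : ZMod n)) + (m : ZMod n)) := by
  ext x
  simp only [Finset.mem_image, Finset.mem_range]
  constructor
  · rintro ⟨m, hm, rfl⟩
    refine ⟨k - 1 - m, by omega, ?_⟩
    have h1 : ((k - 1 - m : ℕ) : ZMod n) = ((k - 1 : ℕ) : ZMod n) - (m : ZMod n) := by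
      rw [Nat.cast_sub (by omega)]
    rw [h1]; ring
  · rintro ⟨m, hm, rfl⟩
    refine ⟨k - 1 - m, by omega, ?_⟩
    have h1 : ((k - 1 - m : ℕ) : ZMod n) = ((k - 1 : ℕ) : ZMod n) - (m : ZMod n) := by
      rw [Nat.cast_sub (by omega)]
    rw [h1]; ring

lemma affA_image_interval {τ : Equiv.Perm (ZMod n)} (hτ : τ ∈ affA n)
    {I : Finset (ZMod n)} (hI : IsCyclicInterval I) :
    IsCyclicInterval (I.image τ) := by
  obtain ⟨a, k, hk1, hk2, rfl⟩ := hI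
  obtain ⟨c, hc | hc⟩ := hτ
  · refine ⟨a + c, k, hk1, hk2, ?_⟩
    rw [Finset.image_image]
    congr 1; funext m; simp [hc]; ring
  · refine ⟨(c - a) - ((k - 1 : ℕ) : ZMod n), k, hk1, hk2, ?_⟩
    rw [Finset.image_image]
    have : ((fun x => τ x) ∘ fun m : ℕ => a + (m : ZMod n)) =
        fun m : ℕ => (c - a) - (m : ZMod n) := by
      funext m; simp [Function.comp, hc]; ring
    rw [this, reverse_interval]

lemma poleFamily_one :
    poleFamily (1 : Equiv.Perm (ZMod n)) =
      {S | IsCyclicInterval S ∧ 2 ≤ S.card ∧ S.card ≤ n - 2} := by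
  ext S
  simp only [poleFamily, Set.mem_setOf_eq]
  constructor
  · rintro ⟨I, h1, h2, h3, rfl⟩
    simpa using ⟨h1, h2, h3⟩
  · rintro ⟨h1, h2, h3⟩
    exact ⟨S, h1, h2, h3, by simp⟩

lemma poleFamily_eq_one_of_affA {τ : Equiv.Perm (ZMod n)} (hτ : τ ∈ affA n) :
    poleFamily τ = poleFamily 1 := by
  rw [poleFamily_one]
  ext S
  simp only [poleFamily, Set.mem_setOf_eq]
  constructor
  · rintro ⟨I, h1, h2, h3, rfl⟩
    refine ⟨affA_image_interval hτ h1, ?_, ?_⟩ <;>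
      rw [Finset.card_image_of_injective _ τ.injective] <;> assumption
  · rintro ⟨h1, h2, h3⟩
    refine ⟨Finset.image (fun x => τ⁻¹ x) S,
      affA_image_interval ((affA n).inv_mem hτ) h1, ?_, ?_, ?_⟩
    · rwa [Finset.card_image_of_injective _ (τ⁻¹).injective]
    · rwa [Finset.card_image_of_injective _ (τ⁻¹).injective]
    · have hcomp : (⇑τ ∘ fun x => τ⁻¹ x) = id := funext fun x => τ.apply_symm_apply x
      rw [Finset.image_image, hcomp, Finset.image_id]

/-- The hard direction: a permutation preserving the pole family is affine. -/
lemma affA_of_poleFamily (hn : 4 ≤ n) {τ : Equiv.Perm (ZMod n)}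
    (h : poleFamily τ = poleFamily 1) : τ ∈ affA n := by
  haveI : NeZero n := ⟨by omega⟩
  -- step: τ maps adjacent pairs to adjacent pairs
  have step : ∀ a : ZMod n, τ (a + 1) = τ a + 1 ∨ τ (a + 1) = τ a - 1 := by
    intro a
    have hpc : ({a, a + 1} : Finset (ZMod n)).card = 2 :=
      pair_card (show 2 ≤ n by omega) a
    have hmem : (({a, a + 1} : Finset (ZMod n)).image τ) ∈ poleFamily τ := by
      refine ⟨{a, a + 1}, pair_isCyclicInterval (by omega) a, ?_, ?_, rfl⟩
      · rw [hpc]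
      · rw [hpc]; omega
    rw [h, poleFamily_one] at hmem
    obtain ⟨⟨b, k, hk1, hk2, hI⟩, hc2, _⟩ := hmem
    have hcard : (({a, a + 1} : Finset (ZMod n)).image τ).card = 2 := by
      rw [Finset.card_image_of_injective _ τ.injective, pair_card (by omega)]
    have hk : k = 2 := by
      rw [hI, interval_card (by omega) b hk2] at hcard; exact hcard
    subst hk
    rw [← pair_eq_interval] at hI
    have himg : ({a, a + 1} : Finset (ZMod n)).image τ = {τ a, τ (a + 1)} := by
      simp [Finset.image_insert]
    rw [himg] at hI
    have hτa : τ a ∈ ({b, b + 1} : Finset (ZMod n)) := by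
      rw [← hI]; simp
    have hτa1 : τ (a + 1) ∈ ({b, b + 1} : Finset (ZMod n)) := by
      rw [← hI]; simp
    have hne : τ a ≠ τ (a + 1) := by
      intro he
      have := τ.injective he
      exact one_ne_zero_zmod (n := n) (by omega) (by linear_combination -this)
    simp only [Finset.mem_insert, Finset.mem_singleton] at hτa hτa1
    rcases hτa with h1 | h1 <;> rcases hτa1 with h2 | h2
    · exact absurd (h1.trans h2.symm) hne
    · left; rw [h2, h1]
    · right; rw [h2, h1]; ring
    · exact absurd (h1.trans h2.symm) hne
  -- the sign is coherent
  obtain ⟨ε, hε, h0⟩ : ∃ ε : ZMod n, (ε = 1 ∨ ε = -1) ∧ τ (0 + 1) = τ 0 + ε := by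
    rcases step 0 with h1 | h1
    · exact ⟨1, Or.inl rfl, h1⟩
    · exact ⟨-1, Or.inr rfl, by rw [h1]; ring⟩
  have coher : ∀ a : ZMod n, τ (a + 1) = τ a + ε → τ (a + 1 + 1) = τ (a + 1) + ε := by
    intro a ha
    rcases step (a + 1) with h1 | h1 <;> rcases hε with hε | hε
    · rw [h1, hε]
    · exfalso
      have : τ (a + 1 + 1) = τ a := by rw [h1, ha, hε]; ring
      have := τ.injective this
      have h2 : (2 : ZMod n) = 0 := by linear_combination this
      exact two_ne_zero_zmod (by omega) h2
    · exfalso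
      have : τ (a + 1 + 1) = τ a := by rw [h1, ha, hε]; ring
      have := τ.injective this
      have h2 : (2 : ZMod n) = 0 := by linear_combination this
      exact two_ne_zero_zmod (by omega) h2
    · rw [h1, hε]; ring
  have steps : ∀ m : ℕ, τ ((m : ZMod n) + 1) = τ ((m : ZMod n)) + ε := by
    intro m
    induction m with
    | zero => simpa using h0
    | succ m ih =>
      have := coher _ ih
      have hc : ((m + 1 : ℕ) : ZMod n) = (m : ZMod n) + 1 := by push_cast; ring
      rw [hc]
      exact this
  have vals : ∀ m : ℕ, τ ((m : ZMod n)) = τ 0 + ε * m := by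
    intro m
    induction m with
    | zero => simp
    | succ m ih =>
      have hc : ((m + 1 : ℕ) : ZMod n) = (m : ZMod n) + 1 := by push_cast; ring
      rw [hc, steps m, ih]
      push_cast
      ring
  have all : ∀ x : ZMod n, τ x = τ 0 + ε * x := by
    intro x
    have := vals x.val
    rwa [ZMod.natCast_zmod_val] at this
  rcases hε with hε | hε
  · exact ⟨τ 0, Or.inl fun x => by rw [all x, hε]; ring⟩
  · exact ⟨τ 0, Or.inr fun x => by rw [all x, hε]; ring⟩

lemma poleFamily_mul (σ τ : Equiv.Perm (ZMod n)) :
    poleFamily (σ * τ) = (fun S => Finset.image σ S) '' poleFamily τ := by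
  ext S
  simp only [poleFamily, Set.mem_setOf_eq, Set.mem_image]
  constructor
  · rintro ⟨I, h1, h2, h3, rfl⟩
    exact ⟨I.image τ, ⟨I, h1, h2, h3, rfl⟩, by rw [Finset.image_image]; rfl⟩
  · rintro ⟨T, ⟨I, h1, h2, h3, rfl⟩, rfl⟩
    exact ⟨I, h1, h2, h3, by rw [Finset.image_image]; rfl⟩

lemma poleFamily_iff (hn : 4 ≤ n) (σ₁ σ₂ : Equiv.Perm (ZMod n)) :
    poleFamily σ₁ = poleFamily σ₂ ↔ σ₂⁻¹ * σ₁ ∈ dihedralZ n := by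
  haveI : NeZero n := ⟨by omega⟩
  rw [dihedralZ_eq_affA]
  set τ := σ₂⁻¹ * σ₁ with hτ
  have hσ₁ : σ₁ = σ₂ * τ := by rw [hτ]; group
  have h2 : poleFamily σ₂ = (fun S => Finset.image σ₂ S) '' poleFamily 1 := by
    rw [← poleFamily_mul, mul_one]
  have hinj : Function.Injective (fun S : Finset (ZMod n) => Finset.image σ₂ S) :=
    fun S T h => Finset.image_injective σ₂.injective h
  constructor
  · intro heq
    rw [hσ₁, poleFamily_mul, h2] at heq
    have := Set.image_injective.mpr hinj heq
    exact affA_of_poleFamily hn this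
  · intro hmem
    rw [hσ₁, poleFamily_mul, h2, poleFamily_eq_one_of_affA hmem]

lemma ncard_range_poleFamily (hn : 4 ≤ n) :
    (Set.range (fun σ : Equiv.Perm (ZMod n) => poleFamily σ)).ncard =
      (dihedralZ n).index := by
  classical
  set G := Equiv.Perm (ZMod n)
  have hwd : ∀ a b : G, QuotientGroup.leftRel (dihedralZ n) a b →
      poleFamily a = poleFamily b := by
    intro a b hab
    rw [QuotientGroup.leftRel_apply] at hab
    exact ((poleFamily_iff hn b a).mpr hab).symm
  set g : G ⧸ dihedralZ n → Set (Finset (ZMod n)) :=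
    Quotient.lift poleFamily hwd with hg
  have hcomp : (fun σ : G => poleFamily σ) = g ∘ QuotientGroup.mk := rfl
  have hsurj : Function.Surjective (QuotientGroup.mk : G → G ⧸ dihedralZ n) :=
    Quotient.mk''_surjective
  have hrange : Set.range (fun σ : G => poleFamily σ) = Set.range g := by
    rw [hcomp, Function.Surjective.range_comp hsurj]
  have hginj : Function.Injective g := by
    intro x y
    induction x using Quotient.ind
    induction y using Quotient.ind
    intro hxy
    rename_i a b
    have : poleFamily a = poleFamily b := hxy
    rw [poleFamily_iff hn a b] at this
    exact (QuotientGroup.eq (s := dihedralZ n)).mpr this |>.symm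
  rw [hrange, ← Nat.card_coe_set_eq,
    Nat.card_congr (Equiv.ofInjective g hginj).symm]
  rfl

end Aux

/-- There are exactly `(n-1)!/2` distinct deformed realizations: the number of distinct
families `F(σ)` is `(n-1)!/2`; moreover `F(σ₁) = F(σ₂)` iff `σ₂⁻¹σ₁` lies in the dihedral
subgroup, whose number of cosets in `Perm (ZMod n)` is `(n-1)!/2`. -/
theorem card_poleFamilies (n : ℕ) (hn : 4 ≤ n) :
    (Set.range (fun σ : Equiv.Perm (ZMod n) => poleFamily σ)).ncard =
      Nat.factorial (n - 1) / 2 ∧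
    (∀ σ₁ σ₂ : Equiv.Perm (ZMod n),
      poleFamily σ₁ = poleFamily σ₂ ↔ σ₂⁻¹ * σ₁ ∈ dihedralZ n) ∧
    (dihedralZ n).index = Nat.factorial (n - 1) / 2 := by
  refine ⟨?_, fun σ₁ σ₂ => poleFamily_iff hn σ₁ σ₂, index_dihedralZ hn⟩
  rw [ncard_range_poleFamily hn, index_dihedralZ hn]
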